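/- Let n ≥ 2 be an integer, s ∈ ℕ, F ∈ [0,1], and let X be the sum of s independent Bernoulli random variables each taking the value 1 with probability F. Then for every real c > 0, Pr[ |F·s − X| > max{c·log₂ n, F·s} ] ≤ n^(−c/(6·ln 2)). -/

import Mathlib

open MeasureTheory ProbabilityTheory
open scoped ENNReal

/-- Let `n ≥ 2`, `s ∈ ℕ`, `F ∈ [0,1]`, and let `X` be the sum of `s`
independent Bernoulli random variables each taking the value `1` with probability `F`
(so `E[X] = F·s`). Then for every real `c > 0`,
`Pr[ |F·s − X| > max{c·log₂ n, F·s} ] ≤ n^(−c/(6·ln 2))`. -/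
theorem sampled_error_concentration
    {Ω : Type*} [MeasurableSpace Ω] (μ : Measure Ω) [IsProbabilityMeasure μ]
    (n : ℕ) (hn : 2 ≤ n) (s : ℕ) (F : ℝ) (hF0 : 0 ≤ F) (hF1 : F ≤ 1)
    (Y : Fin s → Ω → ℝ) (hmeas : ∀ i, Measurable (Y i))
    (hindep : iIndepFun Y μ)
    (hBernoulli : ∀ i : Fin s, ∀ ω : Ω, Y i ω = 0 ∨ Y i ω = 1)
    (hprob : ∀ i : Fin s, μ {ω | Y i ω = 1} = ENNReal.ofReal F)
    (X : Ω → ℝ) (hX : ∀ ω, X ω = ∑ i : Fin s, Y i ω)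
    (c : ℝ) (hc : 0 < c) :
    μ {ω | max (c * Real.logb 2 n) (F * s) < |F * s - X ω|}
      ≤ ENNReal.ofReal ((n : ℝ) ^ (-(c / (6 * Real.log 2)))) := by
  set t : ℝ := Real.log 2 with ht_def
  have ht1 : (0.6931471803 : ℝ) < t := Real.log_two_gt_d9
  have ht2 : t < 0.6931471808 := Real.log_two_lt_d9
  have ht : 0 < t := by linarith
  set m : ℝ := max (c * Real.logb 2 n) (F * s) with hm_def
  have hn0 : (0:ℝ) < n := by positivity
  have hlogn : Real.log 2 ≤ Real.log n := Real.log_le_log (by norm_num) (by exact_mod_cast hn)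
  have hlogn0 : 0 < Real.log n := lt_of_lt_of_le (by linarith) hlogn
  have hm1 : c * (Real.log n / t) ≤ m := by
    rw [hm_def]
    refine le_max_of_le_left (le_of_eq ?_)
    rw [Real.logb, ht_def]
  have hFs : F * s ≤ m := le_max_right _ _
  have hm0 : 0 < m := lt_of_lt_of_le (by positivity) hm1
  -- nonnegativity of X
  have hY0 : ∀ i ω, 0 ≤ Y i ω := fun i ω => by
    rcases hBernoulli i ω with h | h <;> simp [h]
  have hX0 : ∀ ω, 0 ≤ X ω := fun ω => by
    rw [hX]; exact Finset.sum_nonneg fun i _ => hY0 i ω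
  -- event inclusion
  have hsub : {ω | m < |F * s - X ω|} ⊆ {ω | F * ↑s + m ≤ X ω} := by
    intro ω hω
    simp only [Set.mem_setOf_eq] at hω ⊢
    rcases abs_cases (F * s - X ω) with ⟨heq, _⟩ | ⟨heq, hneg⟩
    · exfalso
      have : F * s - X ω ≤ F * s := by linarith [hX0 ω]
      rw [heq] at hω; linarith
    · rw [heq] at hω; linarith
  -- integrability of exp(t * Y i)
  have hint : ∀ i : Fin s, Integrable (fun ω => Real.exp (t * Y i ω)) μ := by
    intro i
    apply Integrable.mono' (integrable_const (Real.exp t))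
    · exact (((hmeas i).const_mul t).exp).aestronglyMeasurable
    · filter_upwards with ω
      rw [Real.norm_eq_abs, abs_of_pos (Real.exp_pos _)]
      apply Real.exp_le_exp.2
      rcases hBernoulli i ω with h | h <;> simp [h] <;> nlinarith
  have hintX : Integrable (fun ω => Real.exp (t * X ω)) μ := by
    have := hindep.integrable_exp_mul_sum (t := t) hmeas
      (s := Finset.univ) (fun i _ => hint i)
    apply this.congr
    filter_upwards with ω
    simp [hX]
  -- mgf of each Y i
  have hmgf_i : ∀ i : Fin s, mgf (Y i) μ t = 1 + F := by
    intro i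
    have hAmeas : MeasurableSet {ω | Y i ω = 1} := (hmeas i) (measurableSet_singleton 1)
    have key : (fun ω => Real.exp (t * Y i ω))
        = fun ω => 1 + ({ω | Y i ω = 1}).indicator (fun _ => Real.exp t - 1) ω := by
      funext ω
      rcases hBernoulli i ω with h | h
      · have : ω ∉ {ω | Y i ω = 1} := by simp [h]
        simp [h, Set.indicator_of_notMem this]
      · have : ω ∈ {ω | Y i ω = 1} := h
        simp [h, Set.indicator_of_mem this]
    rw [mgf, key]
    rw [integral_add (integrable_const 1)
      ((integrable_indicator_iff hAmeas).2 (integrableOn_const (measure_ne_top μ _)))]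
    rw [integral_indicator hAmeas]
    simp only [integral_const, measure_univ, Measure.real, ENNReal.toReal_one, smul_eq_mul, one_mul,
      MeasureTheory.setIntegral_const, Measure.restrict_apply_univ, hprob i,
      ENNReal.toReal_ofReal hF0]
    rw [ht_def, Real.exp_log (by norm_num)]
    ring
  -- mgf of X
  have hmgfX : mgf X μ t = (1 + F) ^ s := by
    have h1 : mgf X μ t = mgf (∑ i : Fin s, Y i) μ t := by
      congr 1; funext ω; simp [hX]
    rw [h1, hindep.mgf_sum hmeas]
    simp [hmgf_i]
  -- Chernoff
  have chern := measure_ge_le_exp_mul_mgf (μ := μ) (X := X) (F * s + m) ht.le hintX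
  rw [hmgfX] at chern
  -- real arithmetic
  have hreal : Real.exp (-t * (F * ↑s + m)) * (1 + F) ^ s ≤ (n : ℝ) ^ (-(c / (6 * Real.log 2))) := by
    have h1 : (1 + F) ^ s ≤ Real.exp (F * s) := by
      calc (1 + F) ^ s ≤ (Real.exp F) ^ s := by
            apply pow_le_pow_left₀ (by linarith)
            linarith [Real.add_one_le_exp F]
          _ = Real.exp (F * s) := by rw [← Real.exp_nat_mul]; ring_nf
    have h2 : Real.exp (-t * (F * ↑s + m)) * (1 + F) ^ s
        ≤ Real.exp (-t * (F * ↑s + m) + F * s) := by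
      rw [Real.exp_add]
      exact mul_le_mul_of_nonneg_left h1 (Real.exp_pos _).le
    refine h2.trans ?_
    rw [Real.rpow_def_of_pos hn0, ← ht_def]
    apply Real.exp_le_exp.2
    have hFs0 : 0 ≤ F * (s:ℝ) := by positivity
    have step1 : -t * (F * ↑s + m) + F * s ≤ (1 - 2 * t) * m := by nlinarith
    refine step1.trans ?_
    have step2 : (1 - 2 * t) * m ≤ (1 - 2 * t) * (c * (Real.log n / t)) := by
      apply mul_le_mul_of_nonpos_left hm1 (by linarith)
    refine step2.trans ?_
    calc (1 - 2 * t) * (c * (Real.log ↑n / t)) = ((1 - 2 * t) * (c * Real.log ↑n)) / t := by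
          ring
      _ ≤ (-(c * Real.log ↑n) / 6) / t := by
          gcongr ?_ / t
          nlinarith [mul_pos hc hlogn0]
      _ = Real.log ↑n * -(c / (6 * t)) := by ring
  calc μ {ω | m < |F * s - X ω|} ≤ μ {ω | F * ↑s + m ≤ X ω} := measure_mono hsub
    _ = ENNReal.ofReal ((μ {ω | F * ↑s + m ≤ X ω}).toReal) :=
        (ENNReal.ofReal_toReal (measure_ne_top μ _)).symm
    _ ≤ ENNReal.ofReal (Real.exp (-t * (F * ↑s + m)) * (1 + F) ^ s) :=
        ENNReal.ofReal_le_ofReal chern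
    _ ≤ _ := ENNReal.ofReal_le_ofReal hreal
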